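/- arXiv:1902.01708 — 5 statements merged into one kernel-verified Lean document; each statement's English description precedes it below -/
import Mathlib

section
/- Let φ₁, φ₂ be symbols and t₁, t₂ > 0. The weighted translation operators S_{1,t₁} and S_{2,t₂} on L²(ℝ₊) commute, i.e. S_{1,t₁}S_{2,t₂} = S_{2,t₂}S_{1,t₁}, if and only if φ₁(x)φ₂(x−t₁) / (φ₁(x−t₁)φ₂(x−t₁−t₂)) = φ₂(x)φ₁(x−t₂) / (φ₂(x−t₂)φ₁(x−t₁−t₂)) for all x ≥ t₁ + t₂. -/
open MeasureTheory Set ContinuousLinearMap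

noncomputable section

namespace WTS

/-- Lebesgue measure restricted to `ℝ₊ = [0, ∞)`. -/
def mu : Measure ℝ := volume.restrict (Set.Ici (0 : ℝ))

/-- The complex Hilbert space `L²(ℝ₊)`. -/
abbrev H : Type := Lp ℂ 2 mu

/-- A symbol: a function `φ` that is continuous and positive on `ℝ₊ = [0, ∞)`. -/
structure IsSymbol (φ : ℝ → ℝ) : Prop where
  cont : ContinuousOn φ (Set.Ici 0)
  pos : ∀ x ∈ Set.Ici (0 : ℝ), 0 < φ x

/-- The weight function `φ_t(x) = √(φ(x)/φ(x−t))` for `x ≥ t`, and `0` for `x < t`. -/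
def wt (φ : ℝ → ℝ) (t : ℝ) (x : ℝ) : ℝ :=
  if t ≤ x then Real.sqrt (φ x / φ (x - t)) else 0

/-- `S` is the weighted translation operator with symbol `φ` and translation `t`:
`(S f)(x) = φ_t(x) f(x−t)` for `x ≥ t` and `0` for `x < t`, where `φ_t` is essentially
bounded. -/
structure IsWT (φ : ℝ → ℝ) (t : ℝ) (S : H →L[ℂ] H) : Prop where
  bdd : ∃ C : ℝ, ∀ᵐ x ∂mu, wt φ t x ≤ C
  eval : ∀ f : H, ∀ᵐ x ∂mu,
    (S f : ℝ → ℂ) x = if t ≤ x then (wt φ t x : ℂ) * (f : ℝ → ℂ) (x - t) else 0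

/-- `φ_t` is essentially bounded below by a positive constant on `[t, ∞)`;
this is precisely left invertibility of the weighted translation operator. -/
def LowerBdd (φ : ℝ → ℝ) (t : ℝ) : Prop :=
  ∃ c : ℝ, 0 < c ∧ ∀ᵐ x ∂mu, t ≤ x → c ≤ wt φ t x

/-- `T` is the Cauchy dual of the weighted translation operator with symbol `φ` and
translation `t`: `(T f)(x) = φ_t(x)⁻¹ f(x−t)` for `x ≥ t` and `0` for `x < t`. -/
def IsWTDual (φ : ℝ → ℝ) (t : ℝ) (T : H →L[ℂ] H) : Prop :=
  ∀ f : H, ∀ᵐ x ∂mu,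
    (T f : ℝ → ℂ) x = if t ≤ x then ((wt φ t x : ℂ))⁻¹ * (f : ℝ → ℂ) (x - t) else 0

/-- The ordered product `S₁^{k₁} ⋯ S_d^{k_d}` of powers of a `d`-tuple of operators. -/
def tuplePow {d : ℕ} (S : Fin d → (H →L[ℂ] H)) (k : Fin d → ℕ) : H →L[ℂ] H :=
  (List.ofFn fun i => S i ^ k i).prod

/-- The joint kernel `E = ⋂ᵢ ker Sᵢ*` of the adjoint tuple. -/
def jointKer {d : ℕ} (S : Fin d → (H →L[ℂ] H)) : Set H :=
  {f : H | ∀ i, ContinuousLinearMap.adjoint (S i) f = 0}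

end WTS

namespace WTS

/-- Pull an a.e. (w.r.t. `mu`) statement back along a nonnegative translation. -/
lemma ae_shift {p : ℝ → Prop} (t : ℝ) (h : ∀ᵐ x ∂mu, p x) :
    ∀ᵐ x ∂mu, t ≤ x → p (x - t) := by
  rw [mu, ae_restrict_iff' measurableSet_Ici] at h ⊢
  rw [ae_iff] at h ⊢
  refine measure_mono_null (fun x hx => ?_)
    (((measurePreserving_sub_right volume t).quasiMeasurePreserving).preimage_null h)
  simp only [mem_setOf_eq, not_forall] at hx ⊢
  obtain ⟨hx0, hxt, hpx⟩ := hx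
  exact ⟨by simpa using sub_nonneg.mpr hxt, hpx⟩

/-- The a.e. formula for a composition of two weighted translations. -/
lemma comp_eval {φa φb : ℝ → ℝ} {ta tb : ℝ} (_hta : 0 < ta) (htb : 0 < tb)
    {Sa Sb : H →L[ℂ] H} (hSa : IsWT φa ta Sa) (hSb : IsWT φb tb Sb) (f : H) :
    ∀ᵐ x ∂mu, (Sa (Sb f) : ℝ → ℂ) x =
      if ta + tb ≤ x then
        ((wt φa ta x : ℂ) * (wt φb tb (x - ta) : ℂ)) * (f : ℝ → ℂ) (x - ta - tb)
      else 0 := by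
  filter_upwards [hSa.eval (Sb f), ae_shift ta (hSb.eval f)] with x h1 h2
  rw [h1]
  by_cases hab : ta + tb ≤ x
  · have hxa : ta ≤ x := by linarith
    rw [if_pos hxa, h2 hxa, if_pos (by linarith : tb ≤ x - ta), if_pos hab]
    ring
  · rw [if_neg hab]
    by_cases hxa : ta ≤ x
    · rw [if_pos hxa, h2 hxa, if_neg (fun h => hab (by linarith)), mul_zero]
    · rw [if_neg hxa]

/-- Equality of products of weights is equivalent to the symbol identity. -/
lemma weight_key {φ₁ φ₂ : ℝ → ℝ} (hφ₁ : IsSymbol φ₁) (hφ₂ : IsSymbol φ₂)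
    {t₁ t₂ : ℝ} (ht₁ : 0 < t₁) (ht₂ : 0 < t₂) {x : ℝ} (hx : t₁ + t₂ ≤ x) :
    (wt φ₁ t₁ x * wt φ₂ t₂ (x - t₁) = wt φ₂ t₂ x * wt φ₁ t₁ (x - t₂)) ↔
    (φ₁ x * φ₂ (x - t₁) / (φ₁ (x - t₁) * φ₂ (x - t₁ - t₂)) =
     φ₂ x * φ₁ (x - t₂) / (φ₂ (x - t₂) * φ₁ (x - t₁ - t₂))) := by
  have p1 := hφ₁.pos x (by simp; linarith)
  have p2 := hφ₁.pos (x - t₁) (by simp; linarith)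
  have p3 := hφ₁.pos (x - t₂) (by simp; linarith)
  have p4 := hφ₁.pos (x - t₁ - t₂) (by simp; linarith)
  have q1 := hφ₂.pos x (by simp; linarith)
  have q2 := hφ₂.pos (x - t₁) (by simp; linarith)
  have q3 := hφ₂.pos (x - t₂) (by simp; linarith)
  have q4 := hφ₂.pos (x - t₁ - t₂) (by simp; linarith)
  have e1 : x - t₁ - t₂ = x - t₂ - t₁ := by ring
  rw [wt, wt, wt, wt, if_pos (by linarith : t₁ ≤ x), if_pos (by linarith : t₂ ≤ x - t₁),
    if_pos (by linarith : t₂ ≤ x), if_pos (by linarith : t₁ ≤ x - t₂),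
    ← Real.sqrt_mul (by positivity), ← Real.sqrt_mul (by positivity),
    div_mul_div_comm, div_mul_div_comm, ← e1,
    Real.sqrt_inj (by positivity) (by positivity)]

/-- The weight `φ_t` is continuous on `[t, ∞)`. -/
lemma wt_contOn {φ : ℝ → ℝ} (hφ : IsSymbol φ) {t : ℝ} (ht : 0 ≤ t) :
    ContinuousOn (wt φ t) (Ici t) := by
  have h1 : ContinuousOn φ (Ici t) := hφ.cont.mono (Ici_subset_Ici.mpr ht)
  have h2 : ContinuousOn (fun x => φ (x - t)) (Ici t) :=
    hφ.cont.comp (continuous_sub_right t).continuousOn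
      (fun x hx => by simp at hx ⊢; linarith)
  refine ContinuousOn.congr
    (f := fun x => Real.sqrt (φ x / φ (x - t))) ?_
    (fun x hx => by simp only [wt]; rw [if_pos (mem_Ici.mp hx)])
  exact Real.continuous_sqrt.comp_continuousOn
    (h1.div h2 (fun x hx => (hφ.pos (x - t) (by simp at hx ⊢; linarith)).ne'))

/-- Two functions continuous on `[a, ∞)` that agree a.e. there agree everywhere there. -/
lemma eqOn_of_ae {a : ℝ} {F G : ℝ → ℝ} (hF : ContinuousOn F (Ici a))
    (hG : ContinuousOn G (Ici a))
    (h : ∀ᵐ x ∂(volume : Measure ℝ), x ∈ Ici a → F x = G x) : EqOn F G (Ici a) := by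
  intro x₀ hx₀
  by_contra hne
  set ε := |F x₀ - G x₀| with hε
  have hεpos : 0 < ε := abs_pos.mpr (sub_ne_zero.mpr hne)
  have hcont : ContinuousWithinAt (fun x => F x - G x) (Ici a) x₀ :=
    (hF x₀ hx₀).sub (hG x₀ hx₀)
  rw [Metric.continuousWithinAt_iff] at hcont
  obtain ⟨δ, hδ, hball⟩ := hcont ε hεpos
  rw [ae_iff] at h
  have hsub : Ico x₀ (x₀ + δ) ⊆ {x | ¬(x ∈ Ici a → F x = G x)} := by
    intro x hx
    have hxa : x ∈ Ici a := le_trans hx₀ hx.1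
    have hd : dist x x₀ < δ := by
      rw [Real.dist_eq, abs_of_nonneg (by linarith [hx.1])]; linarith [hx.2]
    have := hball hxa hd
    rw [Real.dist_eq] at this
    simp only [mem_setOf_eq, not_forall]
    refine ⟨hxa, fun hFG => ?_⟩
    rw [hFG, sub_self, zero_sub, abs_neg] at this
    exact absurd this (lt_irrefl ε)
  have := measure_mono_null hsub h
  rw [Real.volume_Ico] at this
  simp [ENNReal.ofReal_eq_zero] at this
  linarith

/-- `S_{1,t₁}` and `S_{2,t₂}` commute iff the symbols satisfy the stated
identity for all `x ≥ t₁ + t₂`. -/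
theorem statement_0 (φ₁ φ₂ : ℝ → ℝ) (hφ₁ : IsSymbol φ₁) (hφ₂ : IsSymbol φ₂)
    (t₁ t₂ : ℝ) (ht₁ : 0 < t₁) (ht₂ : 0 < t₂)
    (S₁ S₂ : H →L[ℂ] H) (hS₁ : IsWT φ₁ t₁ S₁) (hS₂ : IsWT φ₂ t₂ S₂) :
    S₁ * S₂ = S₂ * S₁ ↔
      ∀ x : ℝ, t₁ + t₂ ≤ x →
        φ₁ x * φ₂ (x - t₁) / (φ₁ (x - t₁) * φ₂ (x - t₁ - t₂)) =
        φ₂ x * φ₁ (x - t₂) / (φ₂ (x - t₂) * φ₁ (x - t₁ - t₂)) := by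
  have key : S₁ * S₂ = S₂ * S₁ ↔
      ∀ x : ℝ, t₁ + t₂ ≤ x →
        wt φ₁ t₁ x * wt φ₂ t₂ (x - t₁) = wt φ₂ t₂ x * wt φ₁ t₁ (x - t₂) := by
    constructor
    · intro hcomm
      -- a.e. equality of weights on each bounded strip, using indicator test functions
      have hn : ∀ n : ℕ, ∀ᵐ x ∂mu, (t₁ + t₂ ≤ x ∧ x - t₁ - t₂ ≤ n) →
          wt φ₁ t₁ x * wt φ₂ t₂ (x - t₁) = wt φ₂ t₂ x * wt φ₁ t₁ (x - t₂) := by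
        intro n
        have hfin : mu (Icc (0:ℝ) n) ≠ ⊤ := by
          rw [mu, Measure.restrict_apply measurableSet_Icc]
          exact ((measure_mono inter_subset_left).trans_lt measure_Icc_lt_top).ne
        set g : H := indicatorConstLp 2 measurableSet_Icc hfin (1:ℂ) with hg
        have hgg : S₁ (S₂ g) = S₂ (S₁ g) := by
          have := congrArg (fun T : H →L[ℂ] H => T g) hcomm
          simpa [ContinuousLinearMap.mul_apply] using this
        have hae : (S₁ (S₂ g) : ℝ → ℂ) =ᵐ[mu] (S₂ (S₁ g) : ℝ → ℂ) := by rw [hgg]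
        filter_upwards [hae, comp_eval ht₁ ht₂ hS₁ hS₂ g, comp_eval ht₂ ht₁ hS₂ hS₁ g,
          ae_shift (t₁ + t₂) (indicatorConstLp_coeFn (p := 2) (μ := mu)
            (hs := measurableSet_Icc) (hμs := hfin) (c := (1:ℂ)))] with x h0 h1 h2 h3
        rintro ⟨hx, hxn⟩
        have e : x - (t₁ + t₂) = x - t₁ - t₂ := by ring
        have hg1 : (g : ℝ → ℂ) (x - t₁ - t₂) = 1 := by
          have h4 := h3 hx
          rw [e] at h4
          rw [hg, h4, indicator_of_mem]
          exact ⟨by linarith, hxn⟩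
        rw [h1, h2, if_pos hx, if_pos (by linarith : t₂ + t₁ ≤ x),
          show x - t₂ - t₁ = x - t₁ - t₂ from by ring, hg1, mul_one, mul_one] at h0
        exact_mod_cast h0
      have hall : ∀ᵐ x ∂mu, t₁ + t₂ ≤ x →
          wt φ₁ t₁ x * wt φ₂ t₂ (x - t₁) = wt φ₂ t₂ x * wt φ₁ t₁ (x - t₂) := by
        filter_upwards [ae_all_iff.mpr hn] with x hx hge
        obtain ⟨n, hn'⟩ := exists_nat_ge (x - t₁ - t₂)
        exact hx n ⟨hge, hn'⟩
      have hvol : ∀ᵐ x ∂(volume : Measure ℝ), x ∈ Ici (t₁ + t₂) →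
          wt φ₁ t₁ x * wt φ₂ t₂ (x - t₁) = wt φ₂ t₂ x * wt φ₁ t₁ (x - t₂) := by
        rw [mu, ae_restrict_iff' measurableSet_Ici] at hall
        filter_upwards [hall] with x hx hmem
        exact hx (by simp at hmem ⊢; linarith) hmem
      have Fcont : ContinuousOn (fun x => wt φ₁ t₁ x * wt φ₂ t₂ (x - t₁))
          (Ici (t₁ + t₂)) :=
        ((wt_contOn hφ₁ ht₁.le).mono (Ici_subset_Ici.mpr (by linarith))).mul
          ((wt_contOn hφ₂ ht₂.le).comp (continuous_sub_right t₁).continuousOn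
            (fun x hx => by simp at hx ⊢; linarith))
      have Gcont : ContinuousOn (fun x => wt φ₂ t₂ x * wt φ₁ t₁ (x - t₂))
          (Ici (t₁ + t₂)) :=
        ((wt_contOn hφ₂ ht₂.le).mono (Ici_subset_Ici.mpr (by linarith))).mul
          ((wt_contOn hφ₁ ht₁.le).comp (continuous_sub_right t₂).continuousOn
            (fun x hx => by simp at hx ⊢; linarith))
      exact fun x hx => eqOn_of_ae Fcont Gcont hvol hx
    · intro hW
      ext f
      rw [ContinuousLinearMap.mul_apply, ContinuousLinearMap.mul_apply]
      filter_upwards [comp_eval ht₁ ht₂ hS₁ hS₂ f, comp_eval ht₂ ht₁ hS₂ hS₁ f]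
        with x h1 h2
      rw [h1, h2]
      by_cases hx : t₁ + t₂ ≤ x
      · rw [if_pos hx, if_pos (by linarith : t₂ + t₁ ≤ x),
          show x - t₂ - t₁ = x - t₁ - t₂ from by ring,
          ← Complex.ofReal_mul, ← Complex.ofReal_mul, hW x hx]
      · rw [if_neg hx, if_neg (fun h => hx (by linarith))]
  rw [key]
  exact forall_congr' fun x => imp_congr_right fun hx => weight_key hφ₁ hφ₂ ht₁ ht₂ hx

end WTS
end
end

section
/- Let S_𝐭 = (S_{1,t₁},…,S_{d,t_d}) be a commuting d-tuple of weighted translation operators with t₁,…,t_d > 0, and let m = min{t₁,…,t_d}. Then the joint kernel E = ⋂_{i=1}^d ker S_{i,tᵢ}^* equals χ_{[0,m)}L²(ℝ₊), i.e. E = { f ∈ L²(ℝ₊) : f = 0 almost everywhere on [m, ∞) }. -/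
open MeasureTheory Set ContinuousLinearMap

noncomputable section

namespace WTS

lemma map_mu (t : ℝ) : mu.map (· + t) = volume.restrict (Set.Ici t) := by
  have h1 : volume.restrict (Set.Ici t) = (volume.map (· + t)).restrict (Set.Ici t) := by
    rw [Measure.IsAddRightInvariant.map_add_right_eq_self]
  rw [h1, Measure.restrict_map (measurable_add_const t) measurableSet_Ici]
  unfold mu
  congr 1
  ext x
  simp

lemma ae_shift_s3 (t : ℝ) (ht : 0 ≤ t) (P : ℝ → Prop) :
    (∀ᵐ x ∂mu, t ≤ x → P x) ↔ ∀ᵐ y ∂mu, P (y + t) := by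
  have e : MeasurableEmbedding (· + t : ℝ → ℝ) :=
    (MeasurableEquiv.addRight t).measurableEmbedding
  rw [← e.ae_map_iff, map_mu t]
  unfold mu
  rw [ae_restrict_iff' measurableSet_Ici, ae_restrict_iff' measurableSet_Ici]
  constructor
  · intro h; filter_upwards [h] with x h hx; exact h (le_trans ht hx) hx
  · intro h; filter_upwards [h] with x h _ hx; exact h hx

lemma restrict_le_mu (t : ℝ) (ht : 0 ≤ t) :
    volume.restrict (Set.Ici t) ≤ mu :=
  Measure.restrict_mono (Set.Ici_subset_Ici.mpr ht) le_rfl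

lemma mu_restrict (t : ℝ) (ht : 0 ≤ t) :
    mu.restrict (Set.Ici t) = volume.restrict (Set.Ici t) := by
  unfold mu
  rw [Measure.restrict_restrict measurableSet_Ici, Set.Ici_inter_Ici,
    max_eq_left ht]

lemma adjoint_eq_zero_iff {φ : ℝ → ℝ} {t : ℝ} {S : H →L[ℂ] H}
    (hφ : IsSymbol φ) (ht : 0 < t) (hS : IsWT φ t S) (f : H) :
    ContinuousLinearMap.adjoint S f = 0 ↔ ∀ᵐ x ∂mu, t ≤ x → (f : ℝ → ℂ) x = 0 := by
  have e : MeasurableEmbedding (· + t : ℝ → ℝ) :=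
    (MeasurableEquiv.addRight t).measurableEmbedding
  -- the shifted f is a.e. strongly measurable and in L²
  have hf_mem : MemLp (fun y : ℝ => (f : ℝ → ℂ) (y + t)) 2 mu := by
    have h1 : MemLp (f : ℝ → ℂ) 2 (volume.restrict (Set.Ici t)) :=
      (Lp.memLp f).mono_measure (restrict_le_mu t ht.le)
    rw [← map_mu t] at h1
    exact (e.memLp_map_measure_iff).mp h1
  -- the weight on the shifted domain
  set w : ℝ → ℝ := fun y => Real.sqrt (φ (y + t) / φ y) with hw
  have hw_cont : ContinuousOn w (Set.Ici 0) := by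
    apply Real.continuous_sqrt.comp_continuousOn
    apply ContinuousOn.div
    · exact hφ.cont.comp (continuous_add_right t).continuousOn
        (fun x hx => by simp at hx ⊢; linarith)
    · exact hφ.cont
    · intro x hx; exact (hφ.pos x hx).ne'
  have hw_aesm : AEStronglyMeasurable w mu :=
    hw_cont.aestronglyMeasurable measurableSet_Ici
  set G : ℝ → ℂ := fun y => (w y : ℂ) * (f : ℝ → ℂ) (y + t) with hGdef
  have hG_aesm : AEStronglyMeasurable G mu := by
    exact ((Complex.continuous_ofReal.comp_aestronglyMeasurable hw_aesm)).mul
      hf_mem.aestronglyMeasurable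
  -- a.e. nonneg and boundedness
  have hae0 : ∀ᵐ y ∂mu, (0 : ℝ) ≤ y := by
    have := ae_restrict_mem (μ := volume) (s := Set.Ici (0:ℝ)) measurableSet_Ici
    exact this
  have hwt_eq : ∀ᵐ y ∂mu, wt φ t (y + t) = w y := by
    filter_upwards [hae0] with y hy
    rw [wt, if_pos (by linarith), add_sub_cancel_right]
  obtain ⟨C, hC⟩ := hS.bdd
  have hC' : ∀ᵐ x ∂mu, wt φ t x ≤ max C 0 := by
    filter_upwards [hC] with x hx; exact le_trans hx (le_max_left _ _)
  have hwbd : ∀ᵐ y ∂mu, wt φ t (y + t) ≤ max C 0 := by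
    have h1 : ∀ᵐ x ∂volume.restrict (Set.Ici t), wt φ t x ≤ max C 0 :=
      (ae_mono (restrict_le_mu t ht.le)) hC'
    rw [← map_mu t] at h1
    exact e.ae_map_iff.mp h1
  have hG_mem : MemLp G 2 mu := by
    apply MemLp.of_le_mul hf_mem hG_aesm
    filter_upwards [hwbd, hwt_eq, hae0] with y hb he hy
    have hw0 : 0 ≤ w y := Real.sqrt_nonneg _
    rw [hGdef]
    simp only [norm_mul, Complex.norm_real]
    rw [Real.norm_of_nonneg hw0]
    exact mul_le_mul_of_nonneg_right (he ▸ hb) (norm_nonneg _)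
  set g : H := hG_mem.toLp G with hgdef
  -- key inner product identity
  have key : ∀ h : H, (inner ℂ (S h) f : ℂ) = inner ℂ h g := by
    intro h
    rw [L2.inner_def, L2.inner_def]
    have step1 : ∫ x, (inner ℂ ((S h : ℝ → ℂ) x) ((f : ℝ → ℂ) x) : ℂ) ∂mu
        = ∫ x, Set.indicator (Set.Ici t)
            (fun x => (starRingEnd ℂ) ((wt φ t x : ℂ) * (h : ℝ → ℂ) (x - t))
              * (f : ℝ → ℂ) x) x ∂mu := by
      apply integral_congr_ae
      filter_upwards [hS.eval h] with x hx
      rw [RCLike.inner_apply, hx]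
      by_cases hxt : t ≤ x
      · rw [if_pos hxt, Set.indicator_of_mem (Set.mem_Ici.mpr hxt), mul_comm]
      · rw [if_neg hxt,
          Set.indicator_of_notMem (fun hmem => hxt (Set.mem_Ici.mp hmem)),
          map_zero, mul_zero]
    rw [step1, integral_indicator measurableSet_Ici, mu_restrict t ht.le,
      ← map_mu t, e.integral_map]
    apply integral_congr_ae
    filter_upwards [hae0, (hG_mem.coeFn_toLp : (g : ℝ → ℂ) =ᵐ[mu] G)] with y hy hg
    rw [RCLike.inner_apply, hg, hGdef]
    simp only [add_sub_cancel_right]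
    rw [wt, if_pos (by linarith : t ≤ y + t), add_sub_cancel_right]
    rw [map_mul, Complex.conj_ofReal]
    ring
  have hadj : ContinuousLinearMap.adjoint S f = g := by
    apply ext_inner_left ℂ
    intro v
    rw [adjoint_inner_right, key v]
  rw [hadj]
  have hzero : g = 0 ↔ G =ᵐ[mu] 0 := by
    rw [hgdef]
    constructor
    · intro h0
      have := hG_mem.coeFn_toLp (f := G)
      rw [h0] at this
      exact (Lp.coeFn_zero ℂ 2 mu).symm.trans this |>.symm
    · intro h0
      rw [← MemLp.toLp_zero (MemLp.zero : MemLp (0 : ℝ → ℂ) 2 mu)]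
      exact (MemLp.toLp_eq_toLp_iff _ _).mpr h0
  rw [hzero, ae_shift_s3 t ht.le]
  constructor
  · intro h0
    filter_upwards [h0, hae0] with y hy hy0
    have hwne : (w y : ℂ) ≠ 0 := by
      simp only [ne_eq, Complex.ofReal_eq_zero]
      refine (Real.sqrt_pos.mpr ?_).ne'
      exact div_pos (hφ.pos _ (by simp; linarith)) (hφ.pos _ hy0)
    have : (w y : ℂ) * (f : ℝ → ℂ) (y + t) = 0 := hy
    exact (mul_eq_zero.mp this).resolve_left hwne
  · intro h0
    filter_upwards [h0] with y hy
    show (w y : ℂ) * (f : ℝ → ℂ) (y + t) = 0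
    rw [hy, mul_zero]


/-- the joint kernel `E = ⋂ᵢ ker S_{i,tᵢ}*` equals
`χ_{[0,m)} L²(ℝ₊)` where `m = min{t₁, …, t_d}`. -/
theorem statement_3 {d : ℕ} (φ : Fin d → ℝ → ℝ) (t : Fin d → ℝ)
    (S : Fin d → (H →L[ℂ] H))
    (hφ : ∀ i, IsSymbol (φ i)) (ht : ∀ i, 0 < t i)
    (hS : ∀ i, IsWT (φ i) (t i) (S i))
    (hcomm : ∀ i j, S i * S j = S j * S i)
    (m : ℝ) (hm : IsLeast (Set.range t) m) :
    ∀ f : H, f ∈ jointKer S ↔ ∀ᵐ x ∂mu, m ≤ x → (f : ℝ → ℂ) x = 0 := by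
  intro f
  have key : ∀ i, (ContinuousLinearMap.adjoint (S i) f = 0 ↔
      ∀ᵐ x ∂mu, t i ≤ x → (f : ℝ → ℂ) x = 0) :=
    fun i => adjoint_eq_zero_iff (hφ i) (ht i) (hS i) f
  obtain ⟨i₀, hi₀⟩ := hm.1
  constructor
  · intro hf
    have := (key i₀).mp (hf i₀)
    rwa [hi₀] at this
  · intro hf i
    apply (key i).mpr
    filter_upwards [hf] with x hx hxi
    exact hx (le_trans (hm.2 ⟨i, rfl⟩) hxi)

end WTS
end
end

section
/- Let S_𝐭 = (S_{1,t₁},…,S_{d,t_d}) be a commuting d-tuple of weighted translation operators with t₁,…,t_d > 0, let m = min{t₁,…,t_d}, and let E be the joint kernel of the adjoint tuple. Then for every k = (k₁,…,k_d) ∈ ℕ^d, S_{1,t₁}^{k₁}⋯S_{d,t_d}^{k_d} E ⊆ χ_{[k·t, k·t + m)} L²(ℝ₊), where k·t = k₁t₁ + ⋯ + k_d t_d; that is, every function in S_𝐭^k E vanishes almost everywhere outside the interval [k·t, k·t + m). -/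
open MeasureTheory Set ContinuousLinearMap

noncomputable section

namespace WTS


lemma ae_shift_sub (t : ℝ) (ht : 0 ≤ t) {p : ℝ → Prop} (hp : ∀ᵐ x ∂mu, p x) :
    ∀ᵐ x ∂mu, t ≤ x → p (x - t) := by
  rw [ae_iff] at hp ⊢
  unfold mu at hp ⊢
  rw [Measure.restrict_apply' measurableSet_Ici] at hp ⊢
  have h2 : volume ((fun x => x + (-t)) ⁻¹' ({x | ¬ p x} ∩ Ici 0)) = 0 := by
    rw [measure_preimage_add_right]; exact hp
  refine measure_mono_null (fun x hx => ?_) h2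
  obtain ⟨hx1, hx2⟩ := hx
  simp only [mem_setOf_eq, Classical.not_imp] at hx1
  refine ⟨by simpa [sub_eq_add_neg] using hx1.2, ?_⟩
  simp only [mem_preimage, mem_Ici]
  linarith [hx1.1]

lemma ae_shift_add (t : ℝ) (ht : 0 ≤ t) {p : ℝ → Prop} (hp : ∀ᵐ x ∂mu, p x) :
    ∀ᵐ x ∂mu, p (x + t) := by
  rw [ae_iff] at hp ⊢
  unfold mu at hp ⊢
  rw [Measure.restrict_apply' measurableSet_Ici] at hp ⊢
  have h2 : volume ((fun x => x + t) ⁻¹' ({x | ¬ p x} ∩ Ici 0)) = 0 := by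
    rw [measure_preimage_add_right]; exact hp
  refine measure_mono_null (fun x hx => ?_) h2
  obtain ⟨hx1, hx2⟩ := hx
  exact ⟨hx1, by simp only [mem_preimage, mem_Ici] at hx2 ⊢; linarith⟩

section wtfacts
variable {φ : ℝ → ℝ} {t : ℝ}

lemma wt_eq (hφ : IsSymbol φ) (ht : 0 < t) :
    wt φ t = fun x => if t ≤ x then Real.sqrt (φ (max x 0) / φ (max (x - t) 0)) else 0 := by
  funext x
  unfold wt
  split_ifs with hxt
  · have h1 : max x 0 = x := max_eq_left (by linarith)
    have h2 : max (x - t) 0 = x - t := max_eq_left (by linarith)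
    rw [h1, h2]
  · rfl

lemma wt_aux_continuous (hφ : IsSymbol φ) (ht : 0 < t) :
    Continuous fun x => Real.sqrt (φ (max x 0) / φ (max (x - t) 0)) := by
  have hmax : Continuous fun x : ℝ => max x 0 := continuous_id.max continuous_const
  have h1 : Continuous fun x : ℝ => φ (max x 0) :=
    hφ.cont.comp_continuous hmax fun x => mem_Ici.mpr (le_max_right _ _)
  have h2 : Continuous fun x : ℝ => φ (max (x - t) 0) :=
    hφ.cont.comp_continuous ((continuous_sub_right t).max continuous_const)
      fun x => mem_Ici.mpr (le_max_right _ _)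
  exact Real.continuous_sqrt.comp (h1.div h2 fun x =>
    (hφ.pos _ (mem_Ici.mpr (le_max_right _ _))).ne')

lemma wt_measurable (hφ : IsSymbol φ) (ht : 0 < t) : Measurable (wt φ t) := by
  rw [wt_eq hφ ht]
  exact Measurable.ite measurableSet_Ici (wt_aux_continuous hφ ht).measurable measurable_const

lemma wt_continuousOn (hφ : IsSymbol φ) (ht : 0 < t) : ContinuousOn (wt φ t) (Ici t) := by
  refine ((wt_aux_continuous hφ ht).continuousOn).congr fun x hx => ?_
  rw [wt_eq hφ ht]
  exact if_pos hx

lemma wt_pos (hφ : IsSymbol φ) (ht : 0 < t) {x : ℝ} (hx : t ≤ x) : 0 < wt φ t x := by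
  unfold wt
  rw [if_pos hx]
  exact Real.sqrt_pos.mpr (div_pos (hφ.pos x (by simp only [mem_Ici]; linarith))
    (hφ.pos _ (by simp only [mem_Ici]; linarith)))

end wtfacts

lemma memLp_shift (g : ℝ → ℂ) (hgsm : StronglyMeasurable g) (t : ℝ) (ht : 0 ≤ t)
    (hg : MemLp g 2 mu) : MemLp (fun x => g (x + t)) 2 mu := by
  have hmp : MeasurePreserving (fun x : ℝ => x + t) mu (volume.restrict (Ici t)) := by
    refine ⟨measurable_add_const t, ?_⟩
    have h1 : (fun x : ℝ => x + t) ⁻¹' (Ici t) = Ici 0 := by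
      ext x; simp [mem_Ici]
    rw [show mu = volume.restrict ((fun x : ℝ => x + t) ⁻¹' (Ici t)) by rw [h1]; rfl,
      ← Measure.restrict_map (measurable_add_const t) measurableSet_Ici,
      map_add_right_eq_self volume t]
  refine ⟨(hgsm.measurable.comp (measurable_add_const t)).aestronglyMeasurable, ?_⟩
  have h2 : eLpNorm (g ∘ fun x : ℝ => x + t) 2 mu = eLpNorm g 2 (volume.restrict (Ici t)) :=
    eLpNorm_comp_measurePreserving hgsm.aestronglyMeasurable hmp
  have h3 : eLpNorm g 2 (volume.restrict (Ici t)) ≤ eLpNorm g 2 mu :=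
    eLpNorm_mono_measure g (Measure.restrict_mono (Ici_subset_Ici.mpr ht) le_rfl)
  calc eLpNorm (fun x => g (x + t)) 2 mu = eLpNorm g 2 (volume.restrict (Ici t)) := h2
    _ ≤ eLpNorm g 2 mu := h3
    _ < ⊤ := hg.2

lemma ker_adj_support {φ : ℝ → ℝ} {t : ℝ} {S : H →L[ℂ] H}
    (hφ : IsSymbol φ) (ht : 0 < t) (hS : IsWT φ t S)
    {e : H} (he : ContinuousLinearMap.adjoint S e = 0) :
    ∀ᵐ x ∂mu, t ≤ x → (e : ℝ → ℂ) x = 0 := by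
  have key : ∀ n : ℕ, ∀ᵐ x ∂mu, x ∈ Icc t (t + n) → (e : ℝ → ℂ) x = 0 := by
    intro n
    set I : Set ℝ := Icc t (t + n) with hI
    have hIne : I.Nonempty := ⟨t, left_mem_Icc.mpr (le_add_of_nonneg_right (Nat.cast_nonneg n))⟩
    have hIsub : I ⊆ Ici t := Icc_subset_Ici_self
    -- minimum of the weight on I
    obtain ⟨x₀, hx₀I, hmin⟩ := isCompact_Icc.exists_isMinOn hIne
      ((wt_continuousOn hφ ht).mono hIsub)
    set c : ℝ := wt φ t x₀ with hc
    have hcpos : 0 < c := wt_pos hφ ht (hIsub hx₀I)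
    have hcle : ∀ y ∈ I, c ≤ wt φ t y := fun y hy => hmin hy
    -- strongly measurable representative of e
    set g : ℝ → ℂ := (Lp.aestronglyMeasurable e).mk _ with hg
    have hgsm : StronglyMeasurable g := (Lp.aestronglyMeasurable e).stronglyMeasurable_mk
    have hge : (e : ℝ → ℂ) =ᵐ[mu] g := (Lp.aestronglyMeasurable e).ae_eq_mk
    -- the test function
    set h : ℝ → ℂ := I.indicator (fun y => ((wt φ t y : ℂ))⁻¹ * g y) with hdefh
    set f₀ : ℝ → ℂ := fun x => h (x + t) with hdeff₀
    have hhm : Measurable h :=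
      (((Complex.measurable_ofReal.comp (wt_measurable hφ ht)).inv).mul
        hgsm.measurable).indicator measurableSet_Icc
    have hf₀m : Measurable f₀ := hhm.comp (measurable_add_const t)
    have hgmem : MemLp g 2 mu := (Lp.memLp e).ae_eq hge
    have hmem : MemLp f₀ 2 mu := by
      refine MemLp.of_le_mul (c := c⁻¹) (memLp_shift g hgsm t ht.le hgmem)
        hf₀m.aestronglyMeasurable (Filter.Eventually.of_forall fun x => ?_)
      show ‖I.indicator (fun y => ((wt φ t y : ℂ))⁻¹ * g y) (x + t)‖ ≤ c⁻¹ * ‖g (x + t)‖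
      by_cases hxI : x + t ∈ I
      · rw [indicator_of_mem hxI, norm_mul]
        have hwpos := wt_pos hφ ht (hIsub hxI)
        have : ‖((wt φ t (x + t) : ℂ))⁻¹‖ = (wt φ t (x + t))⁻¹ := by
          rw [norm_inv, Complex.norm_real, Real.norm_of_nonneg hwpos.le]
        rw [this]
        gcongr
        exact hcle _ hxI
      · rw [indicator_of_notMem hxI, norm_zero]
        positivity
    set f : H := hmem.toLp f₀ with hf
    have hcoe : (f : ℝ → ℂ) =ᵐ[mu] f₀ := hmem.coeFn_toLp
    -- the inner product vanishes
    have hinner : (inner ℂ (S f) e : ℂ) = 0 := by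
      rw [← ContinuousLinearMap.adjoint_inner_right S f e, he, inner_zero_right]
    -- identify the integrand
    set F : ℝ → ℝ := I.indicator (fun y => ‖(e : ℝ → ℂ) y‖ ^ 2) with hdefF
    have hae : (fun x => (inner ℂ ((S f : ℝ → ℂ) x) ((e : ℝ → ℂ) x) : ℂ))
        =ᵐ[mu] fun x => (F x : ℂ) := by
      filter_upwards [hS.eval f, ae_shift_sub t ht.le hcoe, hge] with x hev hsh hgx
      rw [hev]
      by_cases hxt : t ≤ x
      · rw [if_pos hxt, hsh hxt]
        have hf₀x : f₀ (x - t) = h x := by rw [hdeff₀]; norm_num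
        rw [hf₀x]
        by_cases hxI : x ∈ I
        · rw [hdefh, indicator_of_mem hxI]
          have hwne : ((wt φ t x : ℂ)) ≠ 0 := by
            simp only [ne_eq, Complex.ofReal_eq_zero]
            exact (wt_pos hφ ht hxt).ne'
          rw [← mul_assoc, mul_inv_cancel₀ hwne, one_mul, ← hgx]
          rw [hdefF, indicator_of_mem hxI]
          rw [inner_self_eq_norm_sq_to_K]
          norm_cast
        · rw [hdefh, indicator_of_notMem hxI, mul_zero, inner_zero_left,
            hdefF, indicator_of_notMem hxI, Complex.ofReal_zero]
      · rw [if_neg hxt, inner_zero_left, hdefF,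
          indicator_of_notMem (fun hxI => hxt (hIsub hxI)), Complex.ofReal_zero]
    have hFint : Integrable F mu := by
      have h2 : Integrable (fun y => ‖(e : ℝ → ℂ) y‖ ^ 2) mu := by
        have := (Lp.memLp e).integrable_norm_rpow (by norm_num) (by norm_num)
        refine this.congr (Filter.Eventually.of_forall fun x => ?_)
        show ‖(e : ℝ → ℂ) x‖ ^ ((2:ENNReal)).toReal = ‖(e : ℝ → ℂ) x‖ ^ 2
        rw [show ((2:ENNReal)).toReal = ((2:ℕ):ℝ) by norm_num, Real.rpow_natCast]
      exact h2.indicator measurableSet_Icc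
    have hFzero : ∫ x, F x ∂mu = 0 := by
      have h0 : (∫ x, (F x : ℂ) ∂mu) = 0 := by
        rw [← integral_congr_ae hae, ← L2.inner_def, hinner]
      have h1 : ∫ x, ((F x : ℝ) : ℂ) ∂mu = ((∫ x, F x ∂mu : ℝ) : ℂ) := integral_ofReal (𝕜 := ℂ)
      rw [h1] at h0
      exact_mod_cast h0
    have hFae : F =ᵐ[mu] 0 := by
      rw [← integral_eq_zero_iff_of_nonneg_ae ?_ hFint]
      · exact hFzero
      · exact Filter.Eventually.of_forall fun x => indicator_nonneg (fun y _ => sq_nonneg _) x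
    filter_upwards [hFae] with x hFx hxI
    rw [hdefF] at hFx
    simp only [Pi.zero_apply, indicator_of_mem hxI] at hFx
    exact norm_eq_zero.mp (pow_eq_zero_iff (by norm_num) |>.mp hFx)
  have hall := ae_all_iff.mpr key
  filter_upwards [hall] with x hx hxt
  refine hx ⌈x - t⌉₊ ⟨hxt, ?_⟩
  have := Nat.le_ceil (x - t)
  linarith

lemma shift_support {φ : ℝ → ℝ} {t : ℝ} {S : H →L[ℂ] H} (ht : 0 < t) (hS : IsWT φ t S)
    {a b : ℝ} (hb : 0 ≤ b) {f : H}
    (hf : ∀ᵐ x ∂mu, (x < a ∨ b ≤ x) → (f : ℝ → ℂ) x = 0) :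
    ∀ᵐ x ∂mu, (x < a + t ∨ b + t ≤ x) → (S f : ℝ → ℂ) x = 0 := by
  filter_upwards [hS.eval f, ae_shift_sub t ht.le hf] with x hev hsh hx
  rw [hev]
  split_ifs with hxt
  · rw [hsh hxt ?_, mul_zero]
    rcases hx with hx | hx
    · exact Or.inl (by linarith)
    · exact Or.inr (by linarith)
  · rfl

lemma pow_support {φ : ℝ → ℝ} {t : ℝ} {S : H →L[ℂ] H} (ht : 0 < t) (hS : IsWT φ t S)
    {a b : ℝ} (hb : 0 ≤ b) (n : ℕ) {f : H}
    (hf : ∀ᵐ x ∂mu, (x < a ∨ b ≤ x) → (f : ℝ → ℂ) x = 0) :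
    ∀ᵐ x ∂mu, (x < a + n * t ∨ b + n * t ≤ x) → ((S ^ n) f : ℝ → ℂ) x = 0 := by
  induction n with
  | zero => simpa using hf
  | succ n ih =>
    have h1 : ∀ᵐ x ∂mu, (x < (a + n * t) + t ∨ (b + n * t) + t ≤ x) →
        ((S ((S ^ n) f)) : ℝ → ℂ) x = 0 :=
      shift_support ht hS (by positivity) ih
    have h2 : (S ^ (n + 1)) f = S ((S ^ n) f) := by
      rw [pow_succ']; rfl
    rw [h2]
    convert h1 using 3 with x
    push_cast; ring_nf


lemma tuplePow_support : ∀ {d : ℕ} (φ : Fin d → ℝ → ℝ) (t : Fin d → ℝ)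
    (S : Fin d → (H →L[ℂ] H)), (∀ i, 0 < t i) →
    (∀ i, IsWT (φ i) (t i) (S i)) → ∀ (m : ℝ), 0 ≤ m →
    ∀ (k : Fin d → ℕ) (f : H),
    (∀ᵐ x ∂mu, (x < 0 ∨ m ≤ x) → (f : ℝ → ℂ) x = 0) →
    ∀ᵐ x ∂mu, (x < ∑ i, (k i : ℝ) * t i ∨ (∑ i, (k i : ℝ) * t i) + m ≤ x) →
      (tuplePow S k f : ℝ → ℂ) x = 0 := by
  intro d
  induction d with
  | zero =>
    intro φ t S ht hS m hm k f hf
    have h1 : tuplePow S k = 1 := by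
      unfold tuplePow
      simp
    rw [h1]
    simp only [Finset.univ_eq_empty, Finset.sum_empty, zero_add]
    filter_upwards [hf] with x hx hcase
    exact hx hcase
  | succ d ih =>
    intro φ t S ht hS m hm k f hf
    have hsplit : tuplePow S k =
        (S 0 ^ k 0) * tuplePow (fun i => S i.succ) (fun i => k i.succ) := by
      unfold tuplePow
      rw [List.ofFn_succ, List.prod_cons]
    have htail := ih (fun i => φ i.succ) (fun i => t i.succ) (fun i => S i.succ)
      (fun i => ht i.succ) (fun i => hS i.succ) m hm (fun i => k i.succ) f hf
    set a : ℝ := ∑ i : Fin d, ((k i.succ : ℝ)) * t i.succ with ha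
    have ha0 : 0 ≤ a := Finset.sum_nonneg fun i _ =>
      mul_nonneg (Nat.cast_nonneg _) (ht i.succ).le
    have hb0 : (0:ℝ) ≤ a + m := by linarith
    have hpow := pow_support (ht 0) (hS 0) hb0 (k 0) htail
    rw [hsplit]
    have hsum : ∑ i : Fin (d+1), ((k i : ℝ)) * t i = (k 0 : ℝ) * t 0 + a := by
      rw [Fin.sum_univ_succ]
    rw [hsum]
    have happ : ((S 0 ^ k 0) * tuplePow (fun i => S i.succ) (fun i => k i.succ)) f =
        (S 0 ^ k 0) ((tuplePow (fun i => S i.succ) (fun i => k i.succ)) f) := rfl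
    rw [happ]
    filter_upwards [hpow] with x hx hcase
    apply hx
    rcases hcase with hc | hc
    · exact Or.inl (by push_cast at hc ⊢; linarith)
    · exact Or.inr (by push_cast at hc ⊢; linarith)

/-- for every `k ∈ ℕ^d`, `S_𝐭^k E ⊆ χ_{[k·t, k·t + m)} L²(ℝ₊)`, where
`m = min{t₁, …, t_d}` and `E` is the joint kernel of the adjoint tuple. -/
theorem statement_6 {d : ℕ} (φ : Fin d → ℝ → ℝ) (t : Fin d → ℝ)
    (S : Fin d → (H →L[ℂ] H))
    (hφ : ∀ i, IsSymbol (φ i)) (ht : ∀ i, 0 < t i)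
    (hS : ∀ i, IsWT (φ i) (t i) (S i))
    (hcomm : ∀ i j, S i * S j = S j * S i)
    (m : ℝ) (hm : IsLeast (Set.range t) m) :
    ∀ (k : Fin d → ℕ), ∀ e ∈ jointKer S, ∀ᵐ x ∂mu,
      (x < ∑ i, (k i : ℝ) * t i ∨ (∑ i, (k i : ℝ) * t i) + m ≤ x) →
      (tuplePow S k e : ℝ → ℂ) x = 0 := by
  intro k e he
  obtain ⟨i₀, hi₀⟩ := hm.1
  have hm0 : 0 < m := hi₀ ▸ ht i₀
  have he_supp : ∀ᵐ x ∂mu, (x < 0 ∨ m ≤ x) → (e : ℝ → ℂ) x = 0 := by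
    have h1 := ker_adj_support (hφ i₀) (ht i₀) (hS i₀) (he i₀)
    have h2 : ∀ᵐ x ∂mu, x ∈ Ici (0:ℝ) := ae_restrict_mem measurableSet_Ici
    filter_upwards [h1, h2] with x hx1 hx2 hcase
    rcases hcase with hc | hc
    · exact absurd hc (not_lt.mpr hx2)
    · exact hx1 (hi₀ ▸ hc)
  exact tuplePow_support φ t S ht hS m hm0.le k e he_supp

end WTS
end
end

section
/- Let S_t be a weighted translation operator with symbol φ and t > 0, and assume φ_t is essentially bounded below by a positive constant (so S_t is left invertible). Then S_t^*S_t is invertible in B(L²(ℝ₊)) and the Cauchy dual S_t' = S_t(S_t^*S_t)^{-1} is given by (S_t' f)(x) = φ_t(x)^{-1} f(x−t) for a.e. x ≥ t and (S_t' f)(x) = 0 for a.e. x < t. -/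
open MeasureTheory Set ContinuousLinearMap

noncomputable section

namespace WTS

open scoped ComplexConjugate

lemma wt_nonneg (φ : ℝ → ℝ) (t x : ℝ) : 0 ≤ wt φ t x := by
  unfold wt; split
  · exact Real.sqrt_nonneg _
  · exact le_refl 0

lemma ae_shift_up {t : ℝ} (ht : 0 ≤ t) {P : ℝ → Prop} (h : ∀ᵐ x ∂mu, P x) :
    ∀ᵐ y ∂mu, P (y + t) := by
  rw [ae_iff] at h ⊢
  rw [mu, Measure.restrict_apply' measurableSet_Ici] at h ⊢
  have hpre := measure_preimage_add_right volume t ({x | ¬ P x} ∩ Ici 0)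
  have hsub : {y | ¬ P (y + t)} ∩ Ici 0 ⊆ (fun y => y + t) ⁻¹' ({x | ¬ P x} ∩ Ici 0) := by
    rintro y ⟨hy, hy0⟩
    exact ⟨hy, by simpa using add_nonneg hy0 ht⟩
  exact le_antisymm (le_trans (measure_mono hsub) (le_of_eq (hpre.trans h))) (zero_le)

lemma ae_shift_down {t : ℝ} (ht : 0 ≤ t) {P : ℝ → Prop} (h : ∀ᵐ y ∂mu, P y) :
    ∀ᵐ x ∂mu, t ≤ x → P (x - t) := by
  rw [ae_iff] at h ⊢
  rw [mu, Measure.restrict_apply' measurableSet_Ici] at h ⊢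
  have hpre := measure_preimage_add_right volume (-t) ({y | ¬ P y} ∩ Ici 0)
  have hsub : {x | ¬ (t ≤ x → P (x - t))} ∩ Ici 0 ⊆
      (fun x => x + -t) ⁻¹' ({y | ¬ P y} ∩ Ici 0) := by
    rintro x ⟨hx, _⟩
    rw [Set.mem_setOf_eq] at hx
    push_neg at hx
    refine ⟨?_, ?_⟩
    · show x + -t ∈ {y | ¬ P y}
      rw [Set.mem_setOf_eq, ← sub_eq_add_neg]
      exact hx.2
    · show (0:ℝ) ≤ x + -t
      rw [← sub_eq_add_neg]
      exact sub_nonneg.mpr hx.1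
  exact le_antisymm (le_trans (measure_mono hsub) (le_of_eq (hpre.trans h))) (zero_le)

lemma integral_shift {t : ℝ} (ht : 0 ≤ t) (F : ℝ → ℂ) :
    (∫ x, (if t ≤ x then F (x - t) else 0) ∂mu) = ∫ y, F y ∂mu := by
  have h1 : (fun x => if t ≤ x then F (x - t) else 0)
      = (Ici t).indicator (fun x => F (x - t)) := by
    funext x
    by_cases hx : t ≤ x <;> simp [Set.indicator, hx]
  have h0 : mu = volume.restrict (Ici 0) := rfl
  rw [h1, h0, integral_indicator measurableSet_Ici,
      Measure.restrict_restrict measurableSet_Ici]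
  have h2 : Ici t ∩ Ici (0:ℝ) = Ici t := by
    rw [Set.Ici_inter_Ici]
    simp [max_eq_left ht]
  rw [h2, ← integral_indicator measurableSet_Ici,
      ← integral_add_right_eq_self (μ := volume)
        ((Ici t).indicator (fun x => F (x - t))) t,
      ← integral_indicator (measurableSet_Ici : MeasurableSet (Ici (0:ℝ)))]
  congr 1
  funext y
  by_cases hy : (0:ℝ) ≤ y
  · have : t ≤ y + t := by linarith
    simp [Set.indicator, hy, this]
  · have : ¬ t ≤ y + t := by intro h'; exact hy (by linarith)
    simp [Set.indicator, hy, this]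

/-- if `φ_t` is essentially bounded below by a positive constant, then
`S_t* S_t` is invertible in `B(L²(ℝ₊))` and the Cauchy dual `S_t' = S_t (S_t* S_t)⁻¹`
is given by `(S_t' f)(x) = φ_t(x)⁻¹ f(x−t)` for a.e. `x ≥ t` and `0` for a.e. `x < t`. -/
theorem statement_8 (φ : ℝ → ℝ) (hφ : IsSymbol φ) (t : ℝ) (ht : 0 < t)
    (S : H →L[ℂ] H) (hS : IsWT φ t S) (hlb : LowerBdd φ t) :
    IsUnit (ContinuousLinearMap.adjoint S * S) ∧
    ∀ T : H →L[ℂ] H,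
      (ContinuousLinearMap.adjoint S * S) * T = 1 →
      T * (ContinuousLinearMap.adjoint S * S) = 1 →
      IsWTDual φ t (S * T) := by
  obtain ⟨c, hc, hclb⟩ := hlb
  obtain ⟨C, hCub⟩ := hS.bdd
  set A : H →L[ℂ] H := ContinuousLinearMap.adjoint S * S with hA
  set m : ℝ → ℝ := fun y => (wt φ t (y + t))^2 with hm
  -- lower bound for m
  have hm_lb : ∀ᵐ y ∂mu, c^2 ≤ m y := by
    filter_upwards [ae_shift_up ht.le hclb, ae_restrict_mem measurableSet_Ici]
      with y hy hy0
    have h1 : c ≤ wt φ t (y + t) := hy (by simp at hy0; linarith)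
    exact pow_le_pow_left₀ hc.le h1 2
  have hm_ub : ∀ᵐ y ∂mu, m y ≤ (max C 0)^2 := by
    filter_upwards [ae_shift_up ht.le hCub] with y hy
    have h1 : wt φ t (y + t) ≤ max C 0 := le_trans hy (le_max_left _ _)
    exact pow_le_pow_left₀ (wt_nonneg φ t _) h1 2
  -- measurability of m
  have hm_meas : AEMeasurable m mu := by
    have hcont : ContinuousOn (fun y => Real.sqrt (φ (y + t) / φ y)) (Ici 0) := by
      apply Real.continuous_sqrt.comp_continuousOn
      apply ContinuousOn.div
      · exact hφ.cont.comp (continuous_id.add continuous_const).continuousOn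
          (fun y hy => by simp at hy ⊢; linarith)
      · exact hφ.cont
      · intro y hy
        exact (hφ.pos y hy).ne'
    have h1 : AEMeasurable (fun y => (Real.sqrt (φ (y + t) / φ y))^2) mu :=
      ((hcont.aemeasurable measurableSet_Ici).pow_const 2)
    refine h1.congr ?_
    filter_upwards [ae_restrict_mem measurableSet_Ici] with y hy
    have : t ≤ y + t := by simp at hy; linarith
    simp [hm, wt, this, mem_Ici.mp hy]
  have hm_measC : AEMeasurable (fun y => (m y : ℂ)) mu :=
    Complex.measurable_ofReal.comp_aemeasurable hm_meas
  -- the multiplication maps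
  have memM : ∀ u : H, MemLp (fun y => (m y : ℂ) * (u : ℝ → ℂ) y) 2 mu := by
    intro u
    refine MemLp.of_le_mul (c := (max C 0)^2) (Lp.memLp u)
      (hm_measC.aestronglyMeasurable.mul (Lp.aestronglyMeasurable u)) ?_
    filter_upwards [hm_lb, hm_ub] with y h1 h2
    rw [norm_mul, Complex.norm_real, Real.norm_eq_abs,
        abs_of_nonneg (le_trans (by positivity) h1)]
    exact mul_le_mul_of_nonneg_right h2 (norm_nonneg _)
  have memG : ∀ u : H, MemLp (fun y => ((m y : ℂ))⁻¹ * (u : ℝ → ℂ) y) 2 mu := by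
    intro u
    refine MemLp.of_le_mul (c := (c^2)⁻¹) (Lp.memLp u)
      ((hm_measC.inv).aestronglyMeasurable.mul (Lp.aestronglyMeasurable u)) ?_
    filter_upwards [hm_lb] with y h1
    rw [norm_mul, norm_inv, Complex.norm_real, Real.norm_eq_abs,
        abs_of_nonneg (le_trans (by positivity) h1)]
    exact mul_le_mul_of_nonneg_right
      (inv_anti₀ (by positivity) h1) (norm_nonneg _)
  set G : H → H := fun u => (memG u).toLp _ with hG
  -- key inner product formula
  have key : ∀ u v : H, (inner ℂ (S u) (S v) : ℂ)
      = ∫ y, (wt φ t (y + t) : ℂ)^2 * (conj ((u : ℝ → ℂ) y)) * (v : ℝ → ℂ) y ∂mu := by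
    intro u v
    rw [L2.inner_def,
        ← integral_shift ht.le (F := fun y =>
          (wt φ t (y + t) : ℂ)^2 * (conj ((u : ℝ → ℂ) y)) * (v : ℝ → ℂ) y)]
    apply integral_congr_ae
    filter_upwards [hS.eval u, hS.eval v] with x h1 h2
    rw [h1, h2]
    by_cases hx : t ≤ x
    · rw [if_pos hx, if_pos hx, if_pos hx]
      rw [RCLike.inner_apply]
      have hxx : x - t + t = x := sub_add_cancel x t
      rw [hxx]
      simp only [map_mul, Complex.conj_ofReal]
      ring
    · simp [if_neg hx]
  -- A u = multiplication by m
  have hMA : ∀ u : H, A u = (memM u).toLp _ := by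
    intro u
    apply ext_inner_right ℂ
    intro h
    rw [hA, ContinuousLinearMap.mul_apply, ContinuousLinearMap.adjoint_inner_left,
        key u h, L2.inner_def]
    apply integral_congr_ae
    filter_upwards [MemLp.coeFn_toLp (memM u)] with y hy
    rw [RCLike.inner_apply, hy]
    simp only [map_mul, Complex.conj_ofReal, hm]
    push_cast
    ring
  -- A (G f) = f
  have hAG : ∀ f : H, A (G f) = f := by
    intro f
    rw [hMA (G f)]
    have h1 : (fun y => (m y : ℂ) * ((G f : H) : ℝ → ℂ) y) =ᵐ[mu] (f : ℝ → ℂ) := by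
      filter_upwards [MemLp.coeFn_toLp (memG f), hm_lb] with y h2 h3
      rw [h2]
      have hmne : (m y : ℂ) ≠ 0 := by
        simp only [ne_eq, Complex.ofReal_eq_zero]
        exact (lt_of_lt_of_le (by positivity) h3).ne'
      field_simp
    have h2 : ((memM (G f)).toLp _ : ℝ → ℂ) =ᵐ[mu] (f : ℝ → ℂ) :=
      (MemLp.coeFn_toLp (memM (G f))).trans h1
    have h3 : (memM (G f)).toLp _ - f = 0 := by
      rw [Lp.eq_zero_iff_ae_eq_zero]
      filter_upwards [h2, Lp.coeFn_sub ((memM (G f)).toLp _) f] with y hy hy2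
      rw [hy2]
      simp only [Pi.sub_apply, hy, sub_self, Pi.zero_apply]
    exact sub_eq_zero.mp h3
  -- injectivity of A
  have hinj : Function.Injective A := by
    intro u v huv
    have h0 : A (u - v) = 0 := by rw [map_sub, huv, sub_self]
    rw [hMA (u - v)] at h0
    have h1 : (fun y => (m y : ℂ) * ((u - v : H) : ℝ → ℂ) y) =ᵐ[mu] 0 :=
      (MemLp.coeFn_toLp (memM (u - v))).symm.trans
        ((Lp.eq_zero_iff_ae_eq_zero).mp h0)
    have h2 : ((u - v : H) : ℝ → ℂ) =ᵐ[mu] 0 := by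
      filter_upwards [h1, hm_lb] with y hy hy2
      have hmne : (m y : ℂ) ≠ 0 := by
        simp only [ne_eq, Complex.ofReal_eq_zero]
        exact (lt_of_lt_of_le (by positivity) hy2).ne'
      simpa [hmne] using hy
    have := (Lp.eq_zero_iff_ae_eq_zero).mpr h2
    exact sub_eq_zero.mp this
  have hker : LinearMap.ker (A : H →ₗ[ℂ] H) = ⊥ := LinearMap.ker_eq_bot.mpr hinj
  have hran : LinearMap.range (A : H →ₗ[ℂ] H) = ⊤ :=
    LinearMap.range_eq_top.mpr (fun f => ⟨G f, hAG f⟩)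
  constructor
  · exact ContinuousLinearMap.isUnit_iff_bijective.mpr
      ⟨hinj, fun f => ⟨G f, hAG f⟩⟩
  · intro T h1 h2
    intro f
    have hTf : T f = G f := by
      calc T f = T (A (G f)) := by rw [hAG f]
      _ = (T * A) (G f) := rfl
      _ = G f := by rw [h2]; simp
    have hST : (S * T) f = S (G f) := by
      rw [ContinuousLinearMap.mul_apply, hTf]
    rw [hST]
    filter_upwards [hS.eval (G f), hclb,
      ae_shift_down ht.le (MemLp.coeFn_toLp (memG f))] with x hx hcx hgx
    rw [hx]
    by_cases hxt : t ≤ x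
    · rw [if_pos hxt, if_pos hxt, hgx hxt]
      have hm' : m (x - t) = (wt φ t x)^2 := by
        simp [hm, sub_add_cancel]
      rw [hm']
      have hw : (0:ℝ) < wt φ t x := lt_of_lt_of_le hc (hcx hxt)
      have hwne : (wt φ t x : ℂ) ≠ 0 := by
        simp only [ne_eq, Complex.ofReal_eq_zero]
        exact hw.ne'
      push_cast
      field_simp
    · rw [if_neg hxt, if_neg hxt]

end WTS
end
end

section
/- Let (S_{1,t₁},…,S_{d,t_d}) be a d-tuple of left invertible weighted translation operators with t₁,…,t_d > 0, and let S_{i,tᵢ}' denote the Cauchy dual of S_{i,tᵢ}. Then for each pair of indices i, j, the operators S_{i,tᵢ}' and S_{j,t_j}' commute if and only if S_{i,tᵢ} and S_{j,t_j} commute; in particular the toral Cauchy dual d-tuple (S_{1,t₁}',…,S_{d,t_d}') is commuting if and only if the d-tuple (S_{1,t₁},…,S_{d,t_d}) is commuting. -/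
open MeasureTheory Set ContinuousLinearMap

noncomputable section

namespace WTS

/-- Abstract evaluation property: `T` acts as weighted translation by `a` with
(complex) weight `u`. -/
def Ev (a : ℝ) (u : ℝ → ℂ) (T : H →L[ℂ] H) : Prop :=
  ∀ f : H, ∀ᵐ x ∂mu, (T f : ℝ → ℂ) x = if a ≤ x then u x * (f : ℝ → ℂ) (x - a) else 0

/-- Shifting an a.e. (w.r.t. `mu`) statement by `c ≥ 0`. -/
lemma shift_ae {p : ℝ → Prop} (hp : ∀ᵐ y ∂mu, p y) {c : ℝ} (hc : 0 ≤ c) :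
    ∀ᵐ x ∂mu, c ≤ x → p (x - c) := by
  have h1 : ∀ᵐ y ∂(volume : Measure ℝ), y ∈ Ici (0 : ℝ) → p y :=
    (ae_restrict_iff' measurableSet_Ici).mp hp
  have h2 : ∀ᵐ x ∂(volume : Measure ℝ), (x - c) ∈ Ici (0 : ℝ) → p (x - c) :=
    (measurePreserving_sub_right volume c).quasiMeasurePreserving.ae h1
  refine ae_mono Measure.restrict_le_self ?_
  filter_upwards [h2] with x hx hcx
  exact hx (by simp only [mem_Ici]; linarith)

lemma Ev.comp {a b : ℝ} (ha : 0 < a) (hb : 0 < b) {u v : ℝ → ℂ} {A B : H →L[ℂ] H}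
    (hA : Ev a u A) (hB : Ev b v B) :
    Ev (a + b) (fun x => u x * v (x - a)) (A * B) := by
  intro f
  have h2 := shift_ae (hB f) ha.le
  filter_upwards [hA (B f), h2] with x e1 e2
  rw [ContinuousLinearMap.mul_apply, e1]
  by_cases hx : a + b ≤ x
  · have hax : a ≤ x := by linarith
    rw [if_pos hax, e2 hax, if_pos (by linarith : b ≤ x - a), if_pos hx]
    rw [show x - a - b = x - (a + b) by ring, mul_assoc]
  · rw [if_neg hx]
    by_cases hax : a ≤ x
    · rw [if_pos hax, e2 hax, if_neg (by intro h; exact hx (by linarith)), mul_zero]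
    · rw [if_neg hax]

lemma ev_eq_iff {s : ℝ} (hs : 0 ≤ s) {w₁ w₂ : ℝ → ℂ} {T₁ T₂ : H →L[ℂ] H}
    (h1 : Ev s w₁ T₁) (h2 : Ev s w₂ T₂) :
    T₁ = T₂ ↔ ∀ᵐ x ∂mu, s ≤ x → w₁ x = w₂ x := by
  constructor
  · intro hT
    have key : ∀ n : ℕ, ∀ᵐ x ∂mu, s ≤ x → x ≤ n + s → w₁ x = w₂ x := by
      intro n
      have hIcc : mu (Icc (0 : ℝ) n) ≠ ⊤ := by
        refine ne_of_lt (lt_of_le_of_lt (Measure.restrict_le_self _) ?_)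
        exact measure_Icc_lt_top
      set f : H := indicatorConstLp 2 measurableSet_Icc hIcc (1 : ℂ) with hf
      have hcoe : ∀ᵐ y ∂mu, (f : ℝ → ℂ) y = (Icc (0 : ℝ) n).indicator (fun _ => 1) y :=
        indicatorConstLp_coeFn
      have hsh := shift_ae hcoe hs
      filter_upwards [h1 f, h2 f, hsh] with x e1 e2 esh hsx hxn
      rw [hT] at e1
      have hmem : x - s ∈ Icc (0 : ℝ) n := ⟨by linarith, by linarith⟩
      have hval : (f : ℝ → ℂ) (x - s) = 1 := by
        rw [esh hsx, indicator_of_mem hmem]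
      rw [if_pos hsx, hval, mul_one] at e1 e2
      rw [← e1, ← e2]
    have := (MeasureTheory.ae_all_iff).mpr key
    filter_upwards [this] with x hx hsx
    exact hx ⌈x⌉₊ hsx (by
      have : x ≤ (⌈x⌉₊ : ℝ) := Nat.le_ceil x
      linarith)
  · intro hw
    ext f
    filter_upwards [h1 f, h2 f, hw] with x e1 e2 ew
    rw [e1, e2]
    by_cases hsx : s ≤ x
    · rw [if_pos hsx, if_pos hsx, ew hsx]
    · rw [if_neg hsx, if_neg hsx]

/-- the Cauchy duals `S_{i,tᵢ}'` and `S_{j,t_j}'` commute iff `S_{i,tᵢ}` and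
`S_{j,t_j}` commute; in particular the toral Cauchy dual tuple is commuting iff the
original tuple is commuting. -/
theorem statement_12 {d : ℕ} (φ : Fin d → ℝ → ℝ) (t : Fin d → ℝ)
    (S S' : Fin d → (H →L[ℂ] H))
    (hφ : ∀ i, IsSymbol (φ i)) (ht : ∀ i, 0 < t i)
    (hS : ∀ i, IsWT (φ i) (t i) (S i))
    (hlb : ∀ i, LowerBdd (φ i) (t i))
    (hS' : ∀ i, IsWTDual (φ i) (t i) (S' i)) :
    (∀ i j, (S' i * S' j = S' j * S' i ↔ S i * S j = S j * S i)) ∧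
    ((∀ i j, S' i * S' j = S' j * S' i) ↔ (∀ i j, S i * S j = S j * S i)) := by
  set_option maxHeartbeats 1000000 in
  have main : ∀ i j, (S' i * S' j = S' j * S' i ↔ S i * S j = S j * S i) := by
    intro i j
    set u : ℝ → ℂ := fun x => (wt (φ i) (t i) x : ℂ) with hu
    set v : ℝ → ℂ := fun x => (wt (φ j) (t j) x : ℂ) with hv
    have hEi : Ev (t i) u (S i) := (hS i).eval
    have hEj : Ev (t j) v (S j) := (hS j).eval
    have hEi' : Ev (t i) (fun x => (u x)⁻¹) (S' i) := hS' i
    have hEj' : Ev (t j) (fun x => (v x)⁻¹) (S' j) := hS' j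
    have hij : Ev (t i + t j) (fun x => u x * v (x - t i)) (S i * S j) :=
      Ev.comp (u := u) (v := v) (ht i) (ht j) hEi hEj
    have hji : Ev (t i + t j) (fun x => v x * u (x - t j)) (S j * S i) := by
      rw [add_comm (t i) (t j)]; exact Ev.comp (u := v) (v := u) (ht j) (ht i) hEj hEi
    have hij' : Ev (t i + t j) (fun x => (u x)⁻¹ * (v (x - t i))⁻¹) (S' i * S' j) :=
      Ev.comp (u := fun x => (u x)⁻¹) (v := fun x => (v x)⁻¹) (ht i) (ht j) hEi' hEj'
    have hji' : Ev (t i + t j) (fun x => (v x)⁻¹ * (u (x - t j))⁻¹) (S' j * S' i) := by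
      rw [add_comm (t i) (t j)]; exact Ev.comp (u := fun x => (v x)⁻¹) (v := fun x => (u x)⁻¹) (ht j) (ht i) hEj' hEi'
    have hs : (0 : ℝ) ≤ t i + t j := by have := ht i; have := ht j; linarith
    rw [ev_eq_iff hs hij' hji', ev_eq_iff hs hij hji]
    refine Filter.eventually_congr (Filter.Eventually.of_forall fun x => ?_)
    constructor
    · intro h hx
      have := h hx
      rw [← mul_inv, ← mul_inv] at this
      exact inv_injective this
    · intro h hx
      rw [← mul_inv, ← mul_inv, h hx]
  exact ⟨main, ⟨fun h i j => (main i j).mp (h i j), fun h i j => (main i j).mpr (h i j)⟩⟩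

end WTS
end
end
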